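/- arXiv:0805.4366 — 3 statements merged into one kernel-verified Lean document; each statement's English description precedes it below -/
import Mathlib

section
/- There exists a bounded 2×2 matrix function B on the unit circle such that B(ζ)* = B(ζ) and trace B(ζ) = 1 for all ζ ∈ 𝕋, the eigenvalues of B(ζ) are positive and bounded away from zero uniformly in ζ, and there is no constant self-adjoint 2×2 matrix C with rank C = 1 and trace(B(ζ)C) = 1 for a.e. ζ ∈ 𝕋. -/
open MeasureTheory Complex AddCircle Matrix
open scoped ENNReal Real

noncomputable section

instance : Fact (0 < 2 * Real.pi) := ⟨by positivity⟩

/-- The unit circle, realized as `ℝ / 2πℤ`. -/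
abbrev UnitCircle := AddCircle (2 * Real.pi)

/-- Normalized Lebesgue (Haar) measure on the circle. -/
abbrev mT : Measure UnitCircle := haarAddCircle

/-- Operator norm of a matrix, acting between Euclidean spaces. -/
def opN {ι κ : Type} [Fintype ι] [Fintype κ] [DecidableEq κ] (A : Matrix ι κ ℂ) : ℝ :=
  ‖(LinearMap.toContinuousLinearMap (Matrix.toEuclideanLin A) :
      EuclideanSpace ℂ κ →L[ℂ] EuclideanSpace ℂ ι)‖

/-- Hilbert–Schmidt (Frobenius) norm of a matrix. -/
def frob {ι κ : Type} [Fintype ι] [Fintype κ] (A : Matrix ι κ ℂ) : ℝ :=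
  Real.sqrt (∑ i, ∑ j, ‖A i j‖ ^ 2)

/-- Trace (nuclear) norm of a matrix: the sum of its singular values, i.e. of the
square roots of the eigenvalues of `Aᴴ * A`. -/
def trN {ι κ : Type} [Fintype ι] [Fintype κ] [DecidableEq κ] (A : Matrix ι κ ℂ) : ℝ :=
  ∑ j, Real.sqrt ((Matrix.isHermitian_mul_conjTranspose_self Aᴴ).eigenvalues j)

/-- The scalar Hardy class `H^p` on the circle: `L^p` functions whose negative Fourier
coefficients vanish. -/
def ScalarHardy (p : ℝ≥0∞) (f : UnitCircle → ℂ) : Prop :=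
  MemLp f p mT ∧ ∀ n : ℤ, n < 0 → fourierCoeff f n = 0

/-- The vector-valued Hardy class `H^p(ℂ^ι)`. -/
def VectHardy {ι : Type} [Fintype ι] (p : ℝ≥0∞) (f : UnitCircle → EuclideanSpace ℂ ι) : Prop :=
  MemLp f p mT ∧ ∀ n : ℤ, n < 0 → fourierCoeff f n = 0

/-- The matrix-valued Hardy class `H^p(M_{ι,κ})` (entrywise). -/
def MatHardy {ι κ : Type} [Fintype ι] [Fintype κ] (p : ℝ≥0∞)
    (F : UnitCircle → Matrix ι κ ℂ) : Prop :=
  (∀ i j, MemLp (fun t => F t i j) p mT) ∧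
    ∀ n : ℤ, n < 0 → ∀ i j, fourierCoeff (fun t => F t i j) n = 0

/-- The `L²` norm of the antianalytic (negative-frequency) part of a scalar function,
computed via Parseval. -/
def negNormSc (g : UnitCircle → ℂ) : ℝ≥0∞ :=
  (∑' k : ℕ, (‖fourierCoeff g (-((k : ℤ) + 1))‖₊ : ℝ≥0∞) ^ 2) ^ (1 / 2 : ℝ)

/-- The `L²(ℂ^ι)` norm of the antianalytic part of a vector function. -/
def negNormVec {ι : Type} [Fintype ι] (g : UnitCircle → EuclideanSpace ℂ ι) : ℝ≥0∞ :=
  (∑' k : ℕ, (‖fourierCoeff g (-((k : ℤ) + 1))‖₊ : ℝ≥0∞) ^ 2) ^ (1 / 2 : ℝ)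

/-- The `L²(S₂)` norm of the antianalytic part of a matrix function. -/
def negNormMat {ι κ : Type} [Fintype ι] [Fintype κ] (G : UnitCircle → Matrix ι κ ℂ) : ℝ≥0∞ :=
  (∑' k : ℕ, ∑ i, ∑ j,
      (‖fourierCoeff (fun t => G t i j) (-((k : ℤ) + 1))‖₊ : ℝ≥0∞) ^ 2) ^ (1 / 2 : ℝ)

/-- The norm of the Hankel operator `H_Φ : H^q(S₂) → H²₋(S₂)` on matrix functions,
`F ↦ P₋(ΦF)`. -/
def matHankelNorm {ι : Type} [Fintype ι] (q : ℝ≥0∞)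
    (Φ : UnitCircle → Matrix ι ι ℂ) : ℝ≥0∞ :=
  ⨆ F : {F : UnitCircle → Matrix ι ι ℂ //
      MatHardy q F ∧ eLpNorm (fun t => frob (F t)) q mT ≤ 1},
    negNormMat (fun t => Φ t * F.1 t)

/-- The distance in `L^p` (pointwise operator norm) from `Φ` to `H^p(M_n)`. -/
def distHp {ι κ : Type} [Fintype ι] [Fintype κ] [DecidableEq κ] (p : ℝ≥0∞)
    (Φ : UnitCircle → Matrix ι κ ℂ) : ℝ≥0∞ :=
  ⨅ Q : {Q : UnitCircle → Matrix ι κ ℂ // MatHardy p Q},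
    eLpNorm (fun t => opN (Φ t - Q.1 t)) p mT

/-- `Q` is a best analytic approximant to `Φ` in `L^p`. -/
def IsBestApprox {ι κ : Type} [Fintype ι] [Fintype κ] [DecidableEq κ] (p : ℝ≥0∞)
    (Φ Q : UnitCircle → Matrix ι κ ℂ) : Prop :=
  MatHardy p Q ∧ eLpNorm (fun t => opN (Φ t - Q t)) p mT = distHp p Φ

/-- `F` is a maximizing vector of the matrix Hankel operator
`H_Φ : H^q(S₂) → H²₋(S₂)`. -/
def IsMaximizing {ι : Type} [Fintype ι] (q : ℝ≥0∞)
    (Φ F : UnitCircle → Matrix ι ι ℂ) : Prop :=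
  MatHardy q F ∧ ¬ F =ᵐ[mT] 0 ∧
    negNormMat (fun t => Φ t * F t) =
      matHankelNorm q Φ * eLpNorm (fun t => frob (F t)) q mT

/-- A scalar inner function: bounded, analytic, of modulus one a.e. on the circle. -/
def IsInner (θ : UnitCircle → ℂ) : Prop :=
  MemLp θ ⊤ mT ∧ (∀ n : ℤ, n < 0 → fourierCoeff θ n = 0) ∧ ∀ᵐ t ∂mT, ‖θ t‖ = 1

/-- A scalar outer function in `H²`, characterized by the arithmetic–geometric mean
equality `log |ĥ(0)| = ∫ log |h| dm`. -/
def IsOuter (h : UnitCircle → ℂ) : Prop :=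
  MemLp h 2 mT ∧ (∀ n : ℤ, n < 0 → fourierCoeff h n = 0) ∧
    Integrable (fun t => Real.log ‖h t‖) mT ∧
    Real.log ‖fourierCoeff h 0‖ = ∫ t, Real.log ‖h t‖ ∂mT

/-- An inner matrix function: bounded analytic with `Θᴴ Θ = I` a.e. on the circle. -/
def MatInner {ι κ : Type} [Fintype ι] [Fintype κ] [DecidableEq κ]
    (Θ : UnitCircle → Matrix ι κ ℂ) : Prop :=
  (∀ i j, MemLp (fun t => Θ t i j) ⊤ mT) ∧
    (∀ n : ℤ, n < 0 → ∀ i j, fourierCoeff (fun t => Θ t i j) n = 0) ∧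
    ∀ᵐ t ∂mT, (Θ t)ᴴ * Θ t = 1

/-- An analytic (nonnegative-frequency) vector-valued trigonometric polynomial. -/
def AnalyticTrigPoly {ι : Type} [Fintype ι] (g : UnitCircle → EuclideanSpace ℂ ι) : Prop :=
  ∃ (N : ℕ) (c : Fin N → EuclideanSpace ℂ ι),
    g = fun t => ∑ j : Fin N, (fourier ((j : ℕ) : ℤ) t) • c j

/-- An outer matrix function: `F ∈ H²` and polynomial multiples of `F` are dense
in `H²(ℂ^ι)`. -/
def MatOuter {ι κ : Type} [Fintype ι] [Fintype κ] [DecidableEq κ]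
    (F : UnitCircle → Matrix ι κ ℂ) : Prop :=
  MatHardy 2 F ∧
    ∀ g : UnitCircle → EuclideanSpace ℂ ι, VectHardy 2 g → ∀ ε : ℝ, 0 < ε →
      ∃ q : UnitCircle → EuclideanSpace ℂ κ, AnalyticTrigPoly q ∧
        eLpNorm (fun t => Matrix.toEuclideanLin (F t) (q t) - g t) 2 mT < ENNReal.ofReal ε

/-- A co-outer matrix function: its transpose is outer. -/
def MatCoouter {ι κ : Type} [Fintype ι] [DecidableEq ι] [Fintype κ]
    (F : UnitCircle → Matrix ι κ ℂ) : Prop :=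
  MatOuter (fun t => (F t)ᵀ)
/-! ### Auxiliary lemmas -/

lemma norm_fourier_unit (n : ℤ) (t : UnitCircle) : ‖fourier n t‖ = 1 := by
  rw [fourier_apply]
  exact Circle.norm_coe _

lemma integrable_cmul_fourier (c : ℂ) (m : ℤ) :
    Integrable (fun t : UnitCircle => c * fourier m t) mT := by
  refine Integrable.mono' (integrable_const ‖c‖)
    ((continuous_const.mul (map_continuous (fourier m))).aestronglyMeasurable) ?_
  filter_upwards with t
  rw [norm_mul, norm_fourier_unit, mul_one]

lemma fourierCoeff_fourier_base (m n : ℤ) :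
    fourierCoeff (fun t : UnitCircle => fourier m t) n = if n = m then 1 else 0 := by
  unfold fourierCoeff
  have h1 : ∀ t : UnitCircle, fourier (-n) t • fourier m t = fourier (-n + m) t := by
    intro t
    rw [smul_eq_mul, ← fourier_add]
  simp_rw [h1]
  by_cases h : n = m
  · subst h
    simp_rw [neg_add_cancel]
    have h2 : ∀ t : UnitCircle, fourier (0 : ℤ) t = (1 : ℂ) := fun t => fourier_zero
    simp_rw [h2]
    simp
  · rw [if_neg h]
    have hmn : -n + m ≠ 0 := by omega
    exact integral_eq_zero_of_add_right_eq_neg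
      (fourier_add_half_inv_index hmn (by positivity))

lemma fourierCoeff_cmul_fourier (c : ℂ) (m n : ℤ) :
    fourierCoeff (fun t : UnitCircle => c * fourier m t) n = if n = m then c else 0 := by
  rw [fourierCoeff.const_mul (fun t : UnitCircle => fourier m t) c n,
    fourierCoeff_fourier_base]
  split_ifs <;> simp

lemma fourierCoeff_add_int {f g : UnitCircle → ℂ} (hf : Integrable f mT)
    (hg : Integrable g mT) (n : ℤ) :
    fourierCoeff (fun t => f t + g t) n = fourierCoeff f n + fourierCoeff g n := by
  unfold fourierCoeff
  simp_rw [smul_add]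
  refine integral_add ?_ ?_ <;>
  · refine Integrable.bdd_mul (by assumption)
      ((map_continuous (fourier (-n))).aestronglyMeasurable) (c := 1) (Filter.Eventually.of_forall fun t => ?_)
    rw [norm_fourier_unit]

lemma fourierCoeff_five (a b c d e : ℂ) (n : ℤ) :
    fourierCoeff (fun t : UnitCircle => a * fourier 0 t + b * fourier 1 t +
      c * fourier (-1) t + d * fourier 2 t + e * fourier (-2) t) n =
    (if n = 0 then a else 0) + (if n = 1 then b else 0) + (if n = -1 then c else 0) +
      (if n = 2 then d else 0) + (if n = -2 then e else 0) := by
  have i0 := integrable_cmul_fourier a 0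
  have i1 := integrable_cmul_fourier b 1
  have i2 := integrable_cmul_fourier c (-1)
  have i3 := integrable_cmul_fourier d 2
  have i4 := integrable_cmul_fourier e (-2)
  have h2 : fourierCoeff (fun t : UnitCircle => a * fourier 0 t + b * fourier 1 t) n =
      fourierCoeff (fun t : UnitCircle => a * fourier 0 t) n +
      fourierCoeff (fun t : UnitCircle => b * fourier 1 t) n :=
    fourierCoeff_add_int i0 i1 n
  have h3 : fourierCoeff (fun t : UnitCircle => a * fourier 0 t + b * fourier 1 t +
      c * fourier (-1) t) n =
      fourierCoeff (fun t : UnitCircle => a * fourier 0 t + b * fourier 1 t) n +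
      fourierCoeff (fun t : UnitCircle => c * fourier (-1) t) n :=
    fourierCoeff_add_int (i0.add i1) i2 n
  have h4 : fourierCoeff (fun t : UnitCircle => a * fourier 0 t + b * fourier 1 t +
      c * fourier (-1) t + d * fourier 2 t) n =
      fourierCoeff (fun t : UnitCircle => a * fourier 0 t + b * fourier 1 t +
        c * fourier (-1) t) n +
      fourierCoeff (fun t : UnitCircle => d * fourier 2 t) n :=
    fourierCoeff_add_int ((i0.add i1).add i2) i3 n
  have h5 : fourierCoeff (fun t : UnitCircle => a * fourier 0 t + b * fourier 1 t +
      c * fourier (-1) t + d * fourier 2 t + e * fourier (-2) t) n =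
      fourierCoeff (fun t : UnitCircle => a * fourier 0 t + b * fourier 1 t +
        c * fourier (-1) t + d * fourier 2 t) n +
      fourierCoeff (fun t : UnitCircle => e * fourier (-2) t) n :=
    fourierCoeff_add_int (((i0.add i1).add i2).add i3) i4 n
  rw [h5, h4, h3, h2, fourierCoeff_cmul_fourier, fourierCoeff_cmul_fourier,
    fourierCoeff_cmul_fourier, fourierCoeff_cmul_fourier, fourierCoeff_cmul_fourier]

/-- There is a bounded self-adjoint `2×2` matrix function `B` on the circle with
`trace B(ζ) = 1`, eigenvalues positive and uniformly bounded away from zero, such that no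
constant self-adjoint rank-one matrix `C` satisfies `trace (B(ζ) C) = 1` a.e. -/
theorem stmt10 :
    ∃ B : UnitCircle → Matrix (Fin 2) (Fin 2) ℂ,
      (∀ i j, MemLp (fun t => B t i j) ⊤ mT) ∧
      (∀ t, (B t)ᴴ = B t) ∧
      (∀ t, Matrix.trace (B t) = 1) ∧
      (∃ δ : ℝ, 0 < δ ∧ ∀ t, ∀ v : EuclideanSpace ℂ (Fin 2),
        δ * ‖v‖ ^ 2 ≤ (inner ℂ v (Matrix.toEuclideanLin (B t) v) : ℂ).re) ∧
      ¬ ∃ C : Matrix (Fin 2) (Fin 2) ℂ, Cᴴ = C ∧ C.rank = 1 ∧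
          ∀ᵐ t ∂mT, Matrix.trace (B t * C) = 1 := by
  refine ⟨fun t => !![1/2 + (fourier 1 t + fourier (-1) t)/16, (fourier 2 t)/8;
      (fourier (-2) t)/8, 1/2 - (fourier 1 t + fourier (-1) t)/16], ?_, ?_, ?_, ?_, ?_⟩
  · -- boundedness of the entries
    intro i j
    fin_cases i <;> fin_cases j <;>
      simp only [Matrix.cons_val', Matrix.cons_val_zero, Matrix.cons_val_one,
        Matrix.head_cons, Matrix.head_fin_const, Matrix.empty_val',
        Matrix.cons_val_fin_one, Fin.isValue, Fin.zero_eta, Fin.mk_one, Matrix.of_apply]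
    · refine memLp_top_of_bound ((continuous_const.add ((((fourier 1).continuous).add
        ((fourier (-1)).continuous)).div_const 16)).aestronglyMeasurable) 1 ?_
      filter_upwards with t
      calc ‖(1:ℂ)/2 + (fourier 1 t + fourier (-1) t)/16‖
          ≤ ‖(1:ℂ)/2‖ + ‖(fourier 1 t + fourier (-1) t)/16‖ := norm_add_le _ _
        _ ≤ 1/2 + (‖fourier 1 t‖ + ‖fourier (-1) t‖)/16 := by
            have h2 := norm_add_le (fourier 1 t) (fourier (-1) t)
            have e1 : ‖(1:ℂ)/2‖ = 1/2 := by norm_num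
            have e2 : ‖(fourier 1 t + fourier (-1) t)/16‖ =
                ‖fourier 1 t + fourier (-1) t‖/16 := by
              rw [norm_div]
              norm_num
            rw [e1, e2]
            linarith
        _ ≤ 1 := by rw [norm_fourier_unit, norm_fourier_unit]; norm_num
    · refine memLp_top_of_bound (((fourier 2).continuous.div_const 8).aestronglyMeasurable)
        1 ?_
      filter_upwards with t
      rw [norm_div, norm_fourier_unit]
      norm_num
    · refine memLp_top_of_bound (((fourier (-2)).continuous.div_const 8).aestronglyMeasurable)
        1 ?_
      filter_upwards with t
      rw [norm_div, norm_fourier_unit]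
      norm_num
    · refine memLp_top_of_bound ((continuous_const.sub ((((fourier 1).continuous).add
        ((fourier (-1)).continuous)).div_const 16)).aestronglyMeasurable) 1 ?_
      filter_upwards with t
      calc ‖(1:ℂ)/2 - (fourier 1 t + fourier (-1) t)/16‖
          ≤ ‖(1:ℂ)/2‖ + ‖(fourier 1 t + fourier (-1) t)/16‖ := norm_sub_le _ _
        _ ≤ 1/2 + (‖fourier 1 t‖ + ‖fourier (-1) t‖)/16 := by
            have h2 := norm_add_le (fourier 1 t) (fourier (-1) t)
            have e1 : ‖(1:ℂ)/2‖ = 1/2 := by norm_num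
            have e2 : ‖(fourier 1 t + fourier (-1) t)/16‖ =
                ‖fourier 1 t + fourier (-1) t‖/16 := by
              rw [norm_div]
              norm_num
            rw [e1, e2]
            linarith
        _ ≤ 1 := by rw [norm_fourier_unit, norm_fourier_unit]; norm_num
  · -- self-adjointness
    intro t
    have h1 : fourier (-1) t = (starRingEnd ℂ) (fourier 1 t) := fourier_neg
    have h2 : fourier (-2) t = (starRingEnd ℂ) (fourier 2 t) := fourier_neg
    ext i j
    fin_cases i <;> fin_cases j <;>
      simp [Matrix.conjTranspose_apply, h1, h2, map_add, map_sub, map_div₀, RCLike.star_def] <;>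
      ring
  · -- trace one
    intro t
    simp [Matrix.trace_fin_two]
    ring
  · -- uniform positivity
    refine ⟨1/4, by norm_num, fun t v => ?_⟩
    dsimp only
    set x := v 0 with hx
    set y := v 1 with hy
    set f := fourier 1 t with hf
    set g := fourier 2 t with hg
    have hfneg : fourier (-1) t = (starRingEnd ℂ) f := fourier_neg
    have hgneg : fourier (-2) t = (starRingEnd ℂ) g := fourier_neg
    have hnv : ‖v‖ ^ 2 = ‖x‖ ^ 2 + ‖y‖ ^ 2 := by
      rw [EuclideanSpace.norm_eq, Real.sq_sqrt (by positivity)]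
      simp [Fin.sum_univ_two]
      rfl
    have hinner : (inner ℂ v (Matrix.toEuclideanLin
        (!![1/2 + (f + (starRingEnd ℂ) f)/16, g/8;
            (starRingEnd ℂ) g/8, 1/2 - (f + (starRingEnd ℂ) f)/16]) v) : ℂ) =
        (starRingEnd ℂ) x * ((1/2 + (f + (starRingEnd ℂ) f)/16) * x + g/8 * y) +
        (starRingEnd ℂ) y * ((starRingEnd ℂ) g/8 * x + (1/2 - (f + (starRingEnd ℂ) f)/16) * y) := by
      simp [Matrix.toEuclideanLin_apply, PiLp.inner_apply, RCLike.inner_apply,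
        Matrix.mulVec, dotProduct, Fin.sum_univ_two, ← hx, ← hy]
      ring
    rw [hfneg, hgneg, hinner, hnv]
    -- decompose the quadratic form
    have hxx : (starRingEnd ℂ) x * x = ((‖x‖ ^ 2 : ℝ) : ℂ) := by
      rw [mul_comm, Complex.mul_conj']
      norm_cast
    have hyy : (starRingEnd ℂ) y * y = ((‖y‖ ^ 2 : ℝ) : ℂ) := by
      rw [mul_comm, Complex.mul_conj']
      norm_cast
    have hff : f + (starRingEnd ℂ) f = ((2 * f.re : ℝ) : ℂ) := by
      rw [Complex.add_conj]
    have hww : (starRingEnd ℂ) x * g * y + (starRingEnd ℂ) ((starRingEnd ℂ) x * g * y) =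
        ((2 * ((starRingEnd ℂ) x * g * y).re : ℝ) : ℂ) := by
      rw [Complex.add_conj]
    have hconj : (starRingEnd ℂ) ((starRingEnd ℂ) x * g * y) =
        x * (starRingEnd ℂ) g * (starRingEnd ℂ) y := by
      simp only [_root_.map_mul, Complex.conj_conj]
    have hZ : (starRingEnd ℂ) x * ((1/2 + (f + (starRingEnd ℂ) f)/16) * x + g/8 * y) +
        (starRingEnd ℂ) y * ((starRingEnd ℂ) g/8 * x + (1/2 - (f + (starRingEnd ℂ) f)/16) * y) =
        ((( ‖x‖ ^ 2 + ‖y‖ ^ 2)/2 + (2 * f.re/16) * (‖x‖ ^ 2 - ‖y‖ ^ 2) +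
          (2 * ((starRingEnd ℂ) x * g * y).re)/8 : ℝ) : ℂ) := by
      push_cast at hxx hyy hff hww ⊢
      linear_combination (1/2 + (f + (starRingEnd ℂ) f)/16) * hxx +
        (1/2 - (f + (starRingEnd ℂ) f)/16) * hyy +
        (((‖x‖ : ℂ)^2 - (‖y‖ : ℂ)^2)/16) * hff + hww/8 - hconj/8
    rw [hZ, Complex.ofReal_re]
    -- now a real inequality
    have hfre : |f.re| ≤ 1 := by
      calc |f.re| ≤ ‖f‖ := Complex.abs_re_le_norm f
        _ = 1 := by rw [hf, norm_fourier_unit]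
    have hwre : -(‖x‖ * ‖y‖) ≤ ((starRingEnd ℂ) x * g * y).re := by
      have h1 : |((starRingEnd ℂ) x * g * y).re| ≤ ‖x‖ * ‖y‖ := by
        calc |((starRingEnd ℂ) x * g * y).re| ≤ ‖(starRingEnd ℂ) x * g * y‖ :=
            Complex.abs_re_le_norm _
          _ = ‖x‖ * ‖y‖ := by
            rw [norm_mul, norm_mul, RCLike.norm_conj, hg,
              norm_fourier_unit, mul_one]
      linarith [abs_le.mp h1]
    have h1f : 0 ≤ 1 + f.re := by linarith [abs_le.mp hfre]
    have h2f : 0 ≤ 1 - f.re := by linarith [abs_le.mp hfre]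
    nlinarith [sq_nonneg (‖x‖ - ‖y‖), mul_nonneg h1f (sq_nonneg ‖x‖),
      mul_nonneg h2f (sq_nonneg ‖y‖), norm_nonneg x, norm_nonneg y]
  · -- no constant rank-one self-adjoint C
    rintro ⟨C, hC, hrank, hae⟩
    set F : UnitCircle → ℂ := fun t =>
      ((C 0 0 + C 1 1)/2) * fourier 0 t + ((C 0 0 - C 1 1)/16) * fourier 1 t +
      ((C 0 0 - C 1 1)/16) * fourier (-1) t + (C 1 0/8) * fourier 2 t +
      (C 0 1/8) * fourier (-2) t with hF
    have hfun : ∀ t : UnitCircle, Matrix.trace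
        (!![1/2 + (fourier 1 t + fourier (-1) t)/16, (fourier 2 t)/8;
            (fourier (-2) t)/8, 1/2 - (fourier 1 t + fourier (-1) t)/16] * C) = F t := by
      intro t
      have h0 : fourier (0 : ℤ) t = 1 := fourier_zero
      simp only [hF, Matrix.trace_fin_two, Matrix.mul_apply, Fin.sum_univ_two, h0]
      simp [Matrix.cons_val', Matrix.cons_val_zero, Matrix.cons_val_one, Matrix.head_cons]
      ring
    have hcoeffs : ∀ n : ℤ, fourierCoeff F n = if n = 0 then 1 else 0 := by
      intro n
      have h1 : fourierCoeff F n = fourierCoeff (fun _ : UnitCircle => (1 : ℂ)) n := by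
        unfold fourierCoeff
        refine integral_congr_ae ?_
        filter_upwards [hae] with t ht
        rw [← hfun t, ht]
      rw [h1, show (fun _ : UnitCircle => (1 : ℂ)) =
        fun t : UnitCircle => (1 : ℂ) * fourier 0 t by
          funext t; rw [fourier_zero, mul_one], fourierCoeff_cmul_fourier]
    have hcf : ∀ n : ℤ, (if n = 0 then (C 0 0 + C 1 1)/2 else 0) +
        (if n = 1 then (C 0 0 - C 1 1)/16 else 0) +
        (if n = -1 then (C 0 0 - C 1 1)/16 else 0) +
        (if n = 2 then C 1 0/8 else 0) + (if n = -2 then C 0 1/8 else 0) =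
        if n = 0 then 1 else 0 := by
      intro n
      rw [← fourierCoeff_five, ← hF, hcoeffs]
    have e1 : (C 0 0 - C 1 1)/16 = 0 := by simpa using hcf 1
    have e2 : C 1 0/8 = 0 := by simpa using hcf 2
    have e3 : C 0 1/8 = 0 := by simpa using hcf (-2)
    have e0 : (C 0 0 + C 1 1)/2 = 1 := by simpa using hcf 0
    have hd : C 0 0 = C 1 1 := by
      have h16 : (16:ℂ) ≠ 0 := by norm_num
      exact sub_eq_zero.mp ((div_eq_zero_iff.mp e1).resolve_right h16)
    have h10 : C 1 0 = 0 := by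
      have h8 : (8:ℂ) ≠ 0 := by norm_num
      exact (div_eq_zero_iff.mp e2).resolve_right h8
    have h01 : C 0 1 = 0 := by
      have h8 : (8:ℂ) ≠ 0 := by norm_num
      exact (div_eq_zero_iff.mp e3).resolve_right h8
    have hsum : C 0 0 + C 1 1 = 2 := by
      have h2 : (2:ℂ) ≠ 0 := by norm_num
      field_simp at e0
      linear_combination e0
    have h00 : C 0 0 = 1 := by
      rw [← hd] at hsum
      linear_combination hsum / 2
    have h11 : C 1 1 = 1 := hd ▸ h00
    have hCeq : C = 1 := by
      ext i j
      fin_cases i <;> fin_cases j <;> simp [Matrix.one_apply, h00, h11, h10, h01]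
    rw [hCeq, Matrix.rank_one] at hrank
    simp at hrank

end
end

section
/- Let A be a bounded positive definite n×n matrix function on the unit circle with bounded inverse, and let A = ΨΨ* where Ψ is an invertible matrix function in H^∞(M_n) with Ψ⁻¹ ∈ H^∞(M_n). A matrix function F ∈ H^∞(M_n) satisfies AF* = FA a.e. on 𝕋 if and only if F = ΨCΨ⁻¹ for some constant self-adjoint n×n matrix C. -/
open MeasureTheory Complex AddCircle Matrix
open scoped ENNReal Real

noncomputable section

section Stmt12Aux

open scoped ComplexConjugate

lemma st12_norm_fourier (m : ℤ) (x : UnitCircle) : ‖fourier m x‖ = 1 :=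
  Circle.norm_coe _

lemma st12_memTop_fourier (m : ℤ) :
    MemLp (fun t : UnitCircle => (fourier m t : ℂ)) ⊤ mT :=
  memLp_top_of_bound (fourier m).continuous.aestronglyMeasurable 1
    (Filter.Eventually.of_forall fun x => (st12_norm_fourier m x).le)

lemma st12_memTop_conj {f : UnitCircle → ℂ} (hf : MemLp f ⊤ mT) :
    MemLp (fun t => conj (f t)) ⊤ mT := by
  refine ⟨(continuous_star.comp_aestronglyMeasurable hf.1 :), ?_⟩
  have : eLpNorm (fun t => conj (f t)) ⊤ mT = eLpNorm f ⊤ mT :=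
    eLpNorm_congr_norm_ae (Filter.Eventually.of_forall fun x => by simp)
  rw [this]; exact hf.2

lemma st12_memTop_mul {f g : UnitCircle → ℂ} (hf : MemLp f ⊤ mT) (hg : MemLp g ⊤ mT) :
    MemLp (fun t => f t * g t) ⊤ mT :=
  (hg.mul' hf (r := ⊤) :)

lemma st12_integrable {f : UnitCircle → ℂ} (hf : MemLp f ⊤ mT) : Integrable f mT :=
  memLp_one_iff_integrable.mp (hf.mono_exponent le_top)

lemma st12_fourierCoeff_congr {f g : UnitCircle → ℂ} (h : f =ᵐ[mT] g) (m : ℤ) :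
    fourierCoeff f m = fourierCoeff g m := by
  unfold fourierCoeff
  exact integral_congr_ae (h.mono fun t ht => by dsimp only; rw [ht])

lemma st12_fourierCoeff_sum {α : Type*} (s : Finset α) (f : α → UnitCircle → ℂ)
    (h : ∀ a ∈ s, MemLp (f a) ⊤ mT) (m : ℤ) :
    fourierCoeff (fun t => ∑ a ∈ s, f a t) m = ∑ a ∈ s, fourierCoeff (f a) m := by
  unfold fourierCoeff
  rw [← integral_finset_sum]
  · congr 1; funext t; rw [Finset.smul_sum]
  · intro a ha
    exact st12_integrable (st12_memTop_mul (st12_memTop_fourier (-m)) (h a ha))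

lemma st12_fourierCoeff_conj (g : UnitCircle → ℂ) (m : ℤ) :
    fourierCoeff (fun t => conj (g t)) m = conj (fourierCoeff g (-m)) := by
  unfold fourierCoeff
  rw [← integral_conj]
  congr 1; funext t
  simp [smul_eq_mul, _root_.map_mul, ← fourier_neg]

lemma st12_fourierCoeff_mul_fourier (f : UnitCircle → ℂ) (m k : ℤ) :
    fourierCoeff (fun t => f t * fourier m t) k = fourierCoeff f (k - m) := by
  unfold fourierCoeff
  congr 1; funext t
  have h1 : (fourier (-(k - m)) t : ℂ) = fourier (-k) t * fourier m t := by
    rw [← fourier_add]; congr 1; ring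
  rw [smul_eq_mul, smul_eq_mul, h1]; ring

lemma st12_repr_toLp {f : UnitCircle → ℂ} (hf : MemLp f 2 mT) (i : ℤ) :
    fourierBasis.repr (hf.toLp f) i = fourierCoeff f i := by
  rw [fourierBasis_repr]
  exact st12_fourierCoeff_congr hf.coeFn_toLp i

lemma st12_mul_neg_coeff {f g : UnitCircle → ℂ} (hf : MemLp f ⊤ mT) (hg : MemLp g ⊤ mT)
    (hfc : ∀ m : ℤ, m < 0 → fourierCoeff f m = 0)
    (hgc : ∀ m : ℤ, m < 0 → fourierCoeff g m = 0)
    (m : ℤ) (hm : m < 0) : fourierCoeff (fun t => f t * g t) m = 0 := by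
  set u : UnitCircle → ℂ := fun t => conj (f t) * fourier m t with hu
  have hu2 : MemLp u 2 mT :=
    (st12_memTop_mul (st12_memTop_conj hf) (st12_memTop_fourier m)).mono_exponent le_top
  have hg2 : MemLp g 2 mT := hg.mono_exponent le_top
  have hucoeff : ∀ k : ℤ, fourierCoeff u k = conj (fourierCoeff f (m - k)) := by
    intro k
    have h1 : u = fun t => conj (f t * fourier (-m) t) := by
      funext t; rw [hu]; simp [_root_.map_mul, ← fourier_neg]
    rw [h1, st12_fourierCoeff_conj, st12_fourierCoeff_mul_fourier]
    congr 2; ring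
  set U := hu2.toLp u
  set G := hg2.toLp g
  have hinner : (inner ℂ U G : ℂ) = fourierCoeff (fun t => f t * g t) m := by
    rw [MeasureTheory.L2.inner_def]
    unfold fourierCoeff
    apply integral_congr_ae
    filter_upwards [hu2.coeFn_toLp, hg2.coeFn_toLp] with t h1 h2
    rw [h1, h2]
    simp only [RCLike.inner_apply, hu, _root_.map_mul, smul_eq_mul, RCLike.conj_conj, ← fourier_neg]
    ring
  have hzero : ∀ i : ℤ, (inner ℂ U (fourierBasis i) : ℂ) * inner ℂ (fourierBasis i) G = 0 := by
    intro i
    rcases lt_or_ge i 0 with hi | hi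
    · have h2 : (inner ℂ (fourierBasis i) G : ℂ) = fourierCoeff g i := by
        rw [← fourierBasis.repr_apply_apply, st12_repr_toLp hg2]
      rw [h2, hgc i hi, mul_zero]
    · have h2 : (inner ℂ U (fourierBasis i) : ℂ) = conj (fourierCoeff u i) := by
        rw [← inner_conj_symm, ← fourierBasis.repr_apply_apply, st12_repr_toLp hu2]
      rw [h2, hucoeff i, RCLike.conj_conj, hfc (m - i) (by omega), zero_mul]
  have hsum := fourierBasis.hasSum_inner_mul_inner U G
  rw [funext hzero] at hsum
  rw [← hinner, hsum.unique hasSum_zero]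

lemma st12_ae_const_of_coeffs {f : UnitCircle → ℂ} (hf : MemLp f 2 mT)
    (h : ∀ m : ℤ, m ≠ 0 → fourierCoeff f m = 0) :
    f =ᵐ[mT] fun _ => fourierCoeff f 0 := by
  set c := fourierCoeff f 0 with hc
  have key : hf.toLp f = c • fourierBasis 0 := by
    apply fourierBasis.repr.injective
    apply lp.ext
    funext i
    rw [_root_.map_smul, fourierBasis.repr_self, lp.coeFn_smul, Pi.smul_apply, smul_eq_mul,
      st12_repr_toLp hf i, lp.single_apply]
    by_cases hi : i = 0
    · subst hi; simp [hc]
    · rw [h i hi, Pi.single_eq_of_ne hi, mul_zero]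
  have h1 : ⇑(hf.toLp f) =ᵐ[mT] fun _ => c := by
    rw [key]
    refine (Lp.coeFn_smul c _).trans ?_
    have h3 : ⇑(fourierBasis (T := 2 * Real.pi) 0) =ᵐ[mT] fourier 0 := by
      rw [coe_fourierBasis]; exact coeFn_fourierLp 2 0
    filter_upwards [h3] with t ht
    rw [Pi.smul_apply, ht, fourier_zero, smul_eq_mul, mul_one]
  exact hf.coeFn_toLp.symm.trans h1

lemma st12_matHardy_mul {N : ℕ} {X Y : UnitCircle → Matrix (Fin N) (Fin N) ℂ}
    (hX : MatHardy ⊤ X) (hY : MatHardy ⊤ Y) : MatHardy ⊤ (fun t => X t * Y t) := by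
  have hrw : ∀ i j, (fun t => (X t * Y t) i j) = fun t => ∑ k, X t i k * Y t k j := by
    intro i j; funext t; rw [Matrix.mul_apply]
  constructor
  · intro i j
    rw [hrw i j]
    exact memLp_finset_sum _ fun k _ => st12_memTop_mul (hX.1 i k) (hY.1 k j)
  · intro m hm i j
    rw [hrw i j, st12_fourierCoeff_sum _ _ (fun k _ => st12_memTop_mul (hX.1 i k) (hY.1 k j))]
    exact Finset.sum_eq_zero fun k _ =>
      st12_mul_neg_coeff (hX.1 i k) (hY.1 k j) (fun l hl => hX.2 l hl i k)
        (fun l hl => hY.2 l hl k j) m hm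

end Stmt12Aux

/-- Let `A` be a bounded positive definite matrix function with bounded inverse and
`A = Ψ Ψᴴ`, where `Ψ` is invertible in `H^∞(M_n)` (with inverse `Ψi ∈ H^∞(M_n)`).
Then `F ∈ H^∞(M_n)` satisfies `A Fᴴ = F A` a.e. iff `F = Ψ C Ψ⁻¹` for a constant
self-adjoint matrix `C`. -/
theorem stmt12 {n : ℕ} (A Ψ Ψi F : UnitCircle → Matrix (Fin n) (Fin n) ℂ)
    (hAm : ∀ i j, MemLp (fun t => A t i j) ⊤ mT)
    (hAh : ∀ᵐ t ∂mT, (A t)ᴴ = A t)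
    (hpos : ∃ δ : ℝ, 0 < δ ∧ ∀ᵐ t ∂mT, ∀ v : EuclideanSpace ℂ (Fin n),
      δ * ‖v‖ ^ 2 ≤ (inner ℂ v (Matrix.toEuclideanLin (A t) v) : ℂ).re)
    (hΨ : MatHardy ⊤ Ψ) (hΨi : MatHardy ⊤ Ψi)
    (hinv : ∀ᵐ t ∂mT, Ψ t * Ψi t = 1 ∧ Ψi t * Ψ t = 1)
    (hfact : ∀ᵐ t ∂mT, A t = Ψ t * (Ψ t)ᴴ)
    (hF : MatHardy ⊤ F) :
    (∀ᵐ t ∂mT, A t * (F t)ᴴ = F t * A t) ↔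
      ∃ C : Matrix (Fin n) (Fin n) ℂ, Cᴴ = C ∧ ∀ᵐ t ∂mT, F t = Ψ t * C * Ψi t := by
  constructor
  · intro hAF
    set C : UnitCircle → Matrix (Fin n) (Fin n) ℂ := fun t => Ψi t * F t * Ψ t with hCdef
    have hCH : MatHardy ⊤ C := st12_matHardy_mul (st12_matHardy_mul hΨi hF) hΨ
    have hCsa : ∀ᵐ t ∂mT, (C t)ᴴ = C t := by
      filter_upwards [hAF, hinv, hfact] with t h1 h2 h3
      have e1 : (Ψ t)ᴴ * (Ψi t)ᴴ = 1 := by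
        rw [← conjTranspose_mul, h2.2, conjTranspose_one]
      rw [h3] at h1
      -- h1 : Ψ t * (Ψ t)ᴴ * (F t)ᴴ = F t * (Ψ t * (Ψ t)ᴴ)
      simp only [mul_assoc] at h1
      show (Ψi t * F t * Ψ t)ᴴ = Ψi t * F t * Ψ t
      simp only [conjTranspose_mul, mul_assoc]
      have s2 : Ψ t * ((Ψ t)ᴴ * ((F t)ᴴ * (Ψi t)ᴴ)) = F t * (Ψ t * ((Ψ t)ᴴ * (Ψi t)ᴴ)) := by
        have h8 := congrArg (fun X => X * (Ψi t)ᴴ) h1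
        simpa only [mul_assoc] using h8
      calc (Ψ t)ᴴ * ((F t)ᴴ * (Ψi t)ᴴ)
          = Ψi t * (Ψ t * ((Ψ t)ᴴ * ((F t)ᴴ * (Ψi t)ᴴ))) := by
            rw [← mul_assoc (Ψi t) (Ψ t), h2.2, one_mul]
        _ = Ψi t * (F t * (Ψ t * ((Ψ t)ᴴ * (Ψi t)ᴴ))) := by rw [s2]
        _ = Ψi t * (F t * Ψ t) := by rw [e1, mul_one]
    have hconj : ∀ i j, (fun t => C t i j) =ᵐ[mT] fun t => (starRingEnd ℂ) (C t j i) := by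
      intro i j
      filter_upwards [hCsa] with t ht
      show C t i j = (starRingEnd ℂ) (C t j i)
      conv_lhs => rw [← ht]
      rw [conjTranspose_apply]
      rfl
    have hCpos : ∀ m : ℤ, m ≠ 0 → ∀ i j, fourierCoeff (fun t => C t i j) m = 0 := by
      intro m hm i j
      rcases lt_or_gt_of_ne hm with h | h
      · exact hCH.2 m h i j
      · rw [st12_fourierCoeff_congr (hconj i j), st12_fourierCoeff_conj,
          hCH.2 (-m) (by omega) j i, map_zero]
    set C0 : Matrix (Fin n) (Fin n) ℂ :=
      Matrix.of (fun i j => fourierCoeff (fun t => C t i j) 0) with hC0def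
    have hentry : ∀ i j, (fun t => C t i j) =ᵐ[mT] fun _ => C0 i j := fun i j =>
      st12_ae_const_of_coeffs ((hCH.1 i j).mono_exponent le_top)
        (fun m hm => hCpos m hm i j)
    have hCconst : ∀ᵐ t ∂mT, C t = C0 := by
      have h5 : ∀ᵐ t ∂mT, ∀ i j, C t i j = C0 i j :=
        ae_all_iff.2 fun i => ae_all_iff.2 fun j => hentry i j
      filter_upwards [h5] with t ht
      exact Matrix.ext ht
    have hC0sa : C0ᴴ = C0 := by
      ext i j
      rw [conjTranspose_apply]
      have h6 := st12_fourierCoeff_congr (hconj i j) 0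
      rw [st12_fourierCoeff_conj, neg_zero] at h6
      exact (h6.symm : (starRingEnd ℂ) (fourierCoeff (fun t => C t j i) 0) = _)
    refine ⟨C0, hC0sa, ?_⟩
    filter_upwards [hinv, hCconst] with t h2 hc
    rw [← hc]
    show F t = Ψ t * (Ψi t * F t * Ψ t) * Ψi t
    simp only [mul_assoc]
    rw [h2.1, mul_one, ← mul_assoc, h2.1, one_mul]
  · rintro ⟨C, hCsa, hFC⟩
    filter_upwards [hinv, hfact, hFC] with t h2 h3 hf
    have e1 : (Ψ t)ᴴ * (Ψi t)ᴴ = 1 := by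
      rw [← conjTranspose_mul, h2.2, conjTranspose_one]
    rw [h3, hf]
    simp only [conjTranspose_mul, mul_assoc]
    have r1 : (Ψ t)ᴴ * ((Ψi t)ᴴ * (Cᴴ * (Ψ t)ᴴ)) = Cᴴ * (Ψ t)ᴴ := by
      rw [← mul_assoc, e1, one_mul]
    have r2 : Ψi t * (Ψ t * (Ψ t)ᴴ) = (Ψ t)ᴴ := by
      rw [← mul_assoc, h2.2, one_mul]
    rw [r1, r2, hCsa]

end
end

section
/- Let 2 ≤ p < ∞ and q with 1/p + 1/q = 1/2. Suppose Φ ∈ L^p(M_n) admits a factorization Φ = W* diag(Δ, Φ_#) V*, where V and W^t are k-balanced unitary-valued matrix functions (V = (Υ Θ̄), W^t = (Ω Ξ̄) with Υ, Ω, Θ, Ξ inner and co-outer), Δ is a k×k p-badly approximable matrix function, and Φ_# satisfies ‖Φ_#(ζ)‖_{M_{n−k}} ≤ ‖Δ(ζ)‖_{M_k} a.e. on 𝕋. Then Φ is p-badly approximable. -/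
open MeasureTheory Complex AddCircle Matrix
open scoped ENNReal Real

noncomputable section

/-! ### Auxiliary lemmas -/

section OpNormAux

open scoped ComplexConjugate

lemma opN_nonneg {ι κ : Type} [Fintype ι] [Fintype κ] [DecidableEq κ] (A : Matrix ι κ ℂ) :
    0 ≤ opN A := norm_nonneg _

lemma le_opN {ι κ : Type} [Fintype ι] [Fintype κ] [DecidableEq κ] (A : Matrix ι κ ℂ)
    (x : EuclideanSpace ℂ κ) : ‖Matrix.toEuclideanLin A x‖ ≤ opN A * ‖x‖ := by
  simpa [opN] using
    (LinearMap.toContinuousLinearMap (Matrix.toEuclideanLin A) :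
      EuclideanSpace ℂ κ →L[ℂ] EuclideanSpace ℂ ι).le_opNorm x

lemma opN_le {ι κ : Type} [Fintype ι] [Fintype κ] [DecidableEq κ] (A : Matrix ι κ ℂ) {C : ℝ}
    (hC : 0 ≤ C) (h : ∀ x : EuclideanSpace ℂ κ, ‖Matrix.toEuclideanLin A x‖ ≤ C * ‖x‖) :
    opN A ≤ C :=
  ContinuousLinearMap.opNorm_le_bound _ hC (by simpa using h)

lemma toEuclideanLin_mul_apply {α β γ : Type} [Fintype α] [Fintype β] [Fintype γ]
    [DecidableEq β] [DecidableEq γ] (A : Matrix α β ℂ) (B : Matrix β γ ℂ)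
    (x : EuclideanSpace ℂ γ) :
    Matrix.toEuclideanLin (A * B) x = Matrix.toEuclideanLin A (Matrix.toEuclideanLin B x) := by
  simp [Matrix.toEuclideanLin_apply, Matrix.mulVec_mulVec]

lemma norm_toEuclideanLin_unitary {n : Type} [Fintype n] [DecidableEq n] {U : Matrix n n ℂ}
    (hU : Uᴴ * U = 1) (x : EuclideanSpace ℂ n) : ‖Matrix.toEuclideanLin U x‖ = ‖x‖ := by
  have h1 : Matrix.toEuclideanLin Uᴴ (Matrix.toEuclideanLin U x) = x := by
    rw [← toEuclideanLin_mul_apply, hU]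
    simp [Matrix.toEuclideanLin_apply]
  have h2 : (inner ℂ (Matrix.toEuclideanLin U x) (Matrix.toEuclideanLin U x) : ℂ) =
      inner ℂ x (x : EuclideanSpace ℂ n) := by
    conv_lhs => rw [← LinearMap.adjoint_inner_left]
    rw [← Matrix.toEuclideanLin_conjTranspose_eq_adjoint, h1]
  have h3 : ‖Matrix.toEuclideanLin U x‖ ^ 2 = ‖x‖ ^ 2 := by
    rw [← @inner_self_eq_norm_sq ℂ, ← @inner_self_eq_norm_sq ℂ, h2]
  have h4 := congrArg Real.sqrt h3
  rwa [Real.sqrt_sq (norm_nonneg _), Real.sqrt_sq (norm_nonneg _)] at h4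

lemma opN_unitary_left {n κ : Type} [Fintype n] [Fintype κ] [DecidableEq n] [DecidableEq κ]
    {U : Matrix n n ℂ} (hU : Uᴴ * U = 1) (A : Matrix n κ ℂ) : opN (U * A) = opN A := by
  refine le_antisymm (opN_le _ (opN_nonneg A) fun x => ?_) (opN_le _ (opN_nonneg _) fun x => ?_)
  · rw [toEuclideanLin_mul_apply, norm_toEuclideanLin_unitary hU]
    exact le_opN A x
  · calc ‖Matrix.toEuclideanLin A x‖
        = ‖Matrix.toEuclideanLin (U * A) x‖ := by
          rw [toEuclideanLin_mul_apply, norm_toEuclideanLin_unitary hU]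
      _ ≤ opN (U * A) * ‖x‖ := le_opN _ x

lemma opN_unitary_right {n ι : Type} [Fintype n] [Fintype ι] [DecidableEq n]
    {M : Matrix n n ℂ} (hM : Mᴴ * M = 1) (A : Matrix ι n ℂ) : opN (A * M) = opN A := by
  have hM' : M * Mᴴ = 1 := mul_eq_one_comm.mp hM
  have hMH : (Mᴴ)ᴴ * Mᴴ = 1 := by rwa [Matrix.conjTranspose_conjTranspose]
  refine le_antisymm (opN_le _ (opN_nonneg A) fun x => ?_) (opN_le _ (opN_nonneg _) fun x => ?_)
  · rw [toEuclideanLin_mul_apply]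
    calc ‖Matrix.toEuclideanLin A (Matrix.toEuclideanLin M x)‖
        ≤ opN A * ‖Matrix.toEuclideanLin M x‖ := le_opN _ _
      _ = opN A * ‖x‖ := by rw [norm_toEuclideanLin_unitary hM]
  · have hAM : A = A * M * Mᴴ := by rw [Matrix.mul_assoc, hM', Matrix.mul_one]
    calc ‖Matrix.toEuclideanLin A x‖
        = ‖Matrix.toEuclideanLin (A * M) (Matrix.toEuclideanLin Mᴴ x)‖ := by
          conv_lhs => rw [hAM]
          rw [toEuclideanLin_mul_apply]
      _ ≤ opN (A * M) * ‖Matrix.toEuclideanLin Mᴴ x‖ := le_opN _ _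
      _ = opN (A * M) * ‖x‖ := by rw [norm_toEuclideanLin_unitary hMH]

lemma opN_toBlocks₁₁_le {α β : Type} [Fintype α] [Fintype β] [DecidableEq α] [DecidableEq β]
    (M : Matrix (α ⊕ β) (α ⊕ β) ℂ) : opN M.toBlocks₁₁ ≤ opN M := by
  refine opN_le _ (opN_nonneg M) fun x => ?_
  set y : EuclideanSpace ℂ (α ⊕ β) :=
    (WithLp.equiv 2 _).symm (Sum.elim ((WithLp.equiv 2 _) x) 0) with hy
  have hyi : ∀ a : α, y (Sum.inl a) = x a := fun a => rfl
  have hyr : ∀ b : β, y (Sum.inr b) = 0 := fun b => rfl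
  have hyn : ‖y‖ = ‖x‖ := by
    rw [EuclideanSpace.norm_eq, EuclideanSpace.norm_eq]
    congr 1
    rw [Fintype.sum_sum_type]
    simp [hyi, hyr]
  have happ : ∀ i : α, Matrix.toEuclideanLin M y (Sum.inl i) =
      Matrix.toEuclideanLin M.toBlocks₁₁ x i := by
    intro i
    simp only [Matrix.toEuclideanLin_apply]
    show (M *ᵥ _) (Sum.inl i) = (M.toBlocks₁₁ *ᵥ _) i
    simp [Matrix.mulVec, dotProduct, Fintype.sum_sum_type, Matrix.toBlocks₁₁, hyi, hyr]
  have hle : ‖Matrix.toEuclideanLin M.toBlocks₁₁ x‖ ≤ ‖Matrix.toEuclideanLin M y‖ := by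
    rw [EuclideanSpace.norm_eq, EuclideanSpace.norm_eq]
    apply Real.sqrt_le_sqrt
    rw [Fintype.sum_sum_type]
    have : (∑ i : α, ‖Matrix.toEuclideanLin M.toBlocks₁₁ x i‖ ^ 2) =
        ∑ i : α, ‖Matrix.toEuclideanLin M y (Sum.inl i)‖ ^ 2 := by
      refine Finset.sum_congr rfl fun i _ => ?_
      rw [happ i]
    rw [this]
    exact le_add_of_nonneg_right (by positivity)
  calc ‖Matrix.toEuclideanLin M.toBlocks₁₁ x‖ ≤ ‖Matrix.toEuclideanLin M y‖ := hle
    _ ≤ opN M * ‖y‖ := le_opN _ _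
    _ = opN M * ‖x‖ := by rw [hyn]

lemma opN_fromBlocks_le {α β : Type} [Fintype α] [Fintype β] [DecidableEq α] [DecidableEq β]
    (A : Matrix α α ℂ) (B : Matrix β β ℂ) :
    opN (Matrix.fromBlocks A 0 0 B) ≤ max (opN A) (opN B) := by
  set m := max (opN A) (opN B) with hm
  have hm0 : 0 ≤ m := le_trans (opN_nonneg A) (le_max_left _ _)
  refine opN_le _ hm0 fun x => ?_
  set x₁ : EuclideanSpace ℂ α := (WithLp.equiv 2 _).symm (fun a => x (Sum.inl a)) with hx1
  set x₂ : EuclideanSpace ℂ β := (WithLp.equiv 2 _).symm (fun b => x (Sum.inr b)) with hx2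
  have hx1i : ∀ a : α, x₁ a = x (Sum.inl a) := fun a => rfl
  have hx2i : ∀ b : β, x₂ b = x (Sum.inr b) := fun b => rfl
  have hxsq : ‖x‖ ^ 2 = ‖x₁‖ ^ 2 + ‖x₂‖ ^ 2 := by
    rw [EuclideanSpace.norm_eq x, EuclideanSpace.norm_eq x₁, EuclideanSpace.norm_eq x₂,
      Real.sq_sqrt (by positivity), Real.sq_sqrt (by positivity), Real.sq_sqrt (by positivity),
      Fintype.sum_sum_type]
    simp [hx1i, hx2i]
  have happl : ∀ i : α, Matrix.toEuclideanLin (Matrix.fromBlocks A 0 0 B) x (Sum.inl i) =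
      Matrix.toEuclideanLin A x₁ i := by
    intro i
    simp only [Matrix.toEuclideanLin_apply]
    show ((Matrix.fromBlocks A 0 0 B) *ᵥ _) (Sum.inl i) = (A *ᵥ _) i
    simp [Matrix.mulVec, dotProduct, Fintype.sum_sum_type, hx1i]
  have happr : ∀ j : β, Matrix.toEuclideanLin (Matrix.fromBlocks A 0 0 B) x (Sum.inr j) =
      Matrix.toEuclideanLin B x₂ j := by
    intro j
    simp only [Matrix.toEuclideanLin_apply]
    show ((Matrix.fromBlocks A 0 0 B) *ᵥ _) (Sum.inr j) = (B *ᵥ _) j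
    simp [Matrix.mulVec, dotProduct, Fintype.sum_sum_type, hx2i]
  have hMsq : ‖Matrix.toEuclideanLin (Matrix.fromBlocks A 0 0 B) x‖ ^ 2 =
      ‖Matrix.toEuclideanLin A x₁‖ ^ 2 + ‖Matrix.toEuclideanLin B x₂‖ ^ 2 := by
    rw [EuclideanSpace.norm_eq, EuclideanSpace.norm_eq, EuclideanSpace.norm_eq,
      Real.sq_sqrt (by positivity), Real.sq_sqrt (by positivity), Real.sq_sqrt (by positivity),
      Fintype.sum_sum_type]
    congr 1
    · exact Finset.sum_congr rfl fun i _ => by rw [happl i]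
    · exact Finset.sum_congr rfl fun j _ => by rw [happr j]
  have hA := le_opN A x₁
  have hB := le_opN B x₂
  have hA2 : ‖Matrix.toEuclideanLin A x₁‖ ^ 2 ≤ (m * ‖x₁‖) ^ 2 := by
    refine pow_le_pow_left₀ (norm_nonneg _) (hA.trans ?_) 2
    exact mul_le_mul_of_nonneg_right (le_max_left _ _) (norm_nonneg _)
  have hB2 : ‖Matrix.toEuclideanLin B x₂‖ ^ 2 ≤ (m * ‖x₂‖) ^ 2 := by
    refine pow_le_pow_left₀ (norm_nonneg _) (hB.trans ?_) 2
    exact mul_le_mul_of_nonneg_right (le_max_right _ _) (norm_nonneg _)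
  have key : ‖Matrix.toEuclideanLin (Matrix.fromBlocks A 0 0 B) x‖ ^ 2 ≤ (m * ‖x‖) ^ 2 := by
    rw [hMsq, mul_pow, hxsq, mul_add]
    rw [mul_pow] at hA2 hB2
    linarith
  have := Real.sqrt_le_sqrt key
  rwa [Real.sqrt_sq (norm_nonneg _), Real.sqrt_sq (mul_nonneg hm0 (norm_nonneg _))] at this

end OpNormAux

section FourierAux

open scoped ComplexConjugate

lemma fourierCoeff_congr_ae' {f g : UnitCircle → ℂ} (h : f =ᵐ[mT] g) (n : ℤ) :
    fourierCoeff f n = fourierCoeff g n :=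
  integral_congr_ae (h.mono fun t ht => by dsimp only; rw [ht])

lemma memLp_fourier (n : ℤ) : MemLp (fun t : UnitCircle => fourier n t) ⊤ mT :=
  MemLp.of_bound ((map_continuous (fourier n)).aestronglyMeasurable) 1
    (Filter.Eventually.of_forall fun t => by
      simp [Circle.norm_coe])

lemma memLp_conj {f : UnitCircle → ℂ} {p : ℝ≥0∞} (hf : MemLp f p mT) :
    MemLp (fun t => conj (f t)) p mT := by
  refine ⟨Complex.continuous_conj.comp_aestronglyMeasurable hf.1, ?_⟩
  have : eLpNorm (fun t => conj (f t)) p mT = eLpNorm f p mT := by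
    apply eLpNorm_congr_norm_ae
    exact Filter.Eventually.of_forall fun t => by simp
  rw [this]
  exact hf.2

lemma memLp_mul_top_left {f g : UnitCircle → ℂ} {p : ℝ≥0∞} (hf : MemLp f ⊤ mT)
    (hg : MemLp g p mT) : MemLp (fun t => f t * g t) p mT := by
  have h : MemLp (g • f) p mT := by
    rw [show g • f = f • g from funext fun t => by simp [mul_comm]]
    exact MemLp.smul (p := ⊤) hg hf
  have he : (g • f) = fun t => f t * g t := by
    funext t; simp [mul_comm]
  rwa [he] at h

lemma inner_toLp_eq_tsum {u g : UnitCircle → ℂ} (hu : MemLp u 2 mT) (hg : MemLp g 2 mT) :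
    (inner ℂ (hu.toLp u) (hg.toLp g) : ℂ) =
      ∑' m : ℤ, conj (fourierCoeff u m) * fourierCoeff g m := by
  rw [← fourierBasis.repr.inner_map_map (hu.toLp u) (hg.toLp g), lp.inner_eq_tsum]
  congr 1
  funext m
  rw [fourierBasis_repr, fourierBasis_repr, RCLike.inner_apply,
    fourierCoeff_congr_ae' (MemLp.coeFn_toLp hu) m, fourierCoeff_congr_ae' (MemLp.coeFn_toLp hg) m]
  exact mul_comm _ _

/-- Product of a bounded analytic function and an `L²` analytic function is analytic. -/
lemma analytic_mul_coeff {f g : UnitCircle → ℂ}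
    (hf : MemLp f ⊤ mT) (hfa : ∀ n : ℤ, n < 0 → fourierCoeff f n = 0)
    (hg : MemLp g 2 mT) (hga : ∀ n : ℤ, n < 0 → fourierCoeff g n = 0) :
    ∀ n : ℤ, n < 0 → fourierCoeff (fun t => f t * g t) n = 0 := by
  intro n hn
  set u : UnitCircle → ℂ := fun t => conj (fourier (-n) t * f t) with hu_def
  have hu : MemLp u 2 mT := by
    refine memLp_conj ?_
    exact (memLp_mul_top_left (memLp_fourier (-n)) hf).mono_exponent le_top
  have hucoeff : ∀ m : ℤ, fourierCoeff u m = conj (fourierCoeff f (n - m)) := by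
    intro m
    have hpt : ∀ t, fourier (-m) t • u t = conj (fourier (-(n - m)) t • f t) := by
      intro t
      simp only [hu_def, smul_eq_mul]
      rw [show fourier (-m) t = conj (fourier m t) from fourier_neg, ← _root_.map_mul]
      congr 1
      rw [show (-(n - m)) = m + -n by ring, fourier_add]
      ring
    calc fourierCoeff u m
        = ∫ t, conj (fourier (-(n - m)) t • f t) ∂mT :=
          integral_congr_ae (Filter.Eventually.of_forall hpt)
      _ = conj (fourierCoeff f (n - m)) := integral_conj
  have key : fourierCoeff (fun t => f t * g t) n = inner ℂ (hu.toLp u) (hg.toLp g) := by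
    rw [MeasureTheory.L2.inner_def]
    unfold fourierCoeff
    refine integral_congr_ae ?_
    filter_upwards [MemLp.coeFn_toLp hu, MemLp.coeFn_toLp hg] with t h1 h2
    rw [RCLike.inner_apply, h1, h2, hu_def]
    simp only [smul_eq_mul, Complex.conj_conj]
    ring
  rw [key, inner_toLp_eq_tsum hu hg]
  have : ∀ m : ℤ, conj (fourierCoeff u m) * fourierCoeff g m = 0 := by
    intro m
    rcases lt_or_ge m 0 with hm | hm
    · rw [hga m hm, mul_zero]
    · rw [hucoeff m, Complex.conj_conj, hfa (n - m) (by omega), zero_mul]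
  simp only [this]
  exact tsum_zero

lemma fourierCoeff_finset_sum {ι : Type} (s : Finset ι) (F : ι → UnitCircle → ℂ)
    (hF : ∀ i ∈ s, Integrable (F i) mT) (n : ℤ) :
    fourierCoeff (fun t => ∑ i ∈ s, F i t) n = ∑ i ∈ s, fourierCoeff (F i) n := by
  unfold fourierCoeff
  rw [← integral_finset_sum]
  · congr 1
    funext t
    rw [Finset.smul_sum]
  · intro i hi
    have hb : ∀ᵐ t ∂mT, ‖fourier (-n) t‖ ≤ (1 : ℝ) :=
      Filter.Eventually.of_forall fun t => by simp [Circle.norm_coe]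
    simpa [smul_eq_mul] using
      (hF i hi).bdd_mul ((map_continuous (fourier (-n))).aestronglyMeasurable) hb

end FourierAux
/-- If `Φ ∈ L^p(M_n)` admits a factorization `Φ = Wᴴ · diag(Δ, Φ#) · Vᴴ` with `V`, `Wᵗ`
`k`-balanced (built from inner and co-outer `Υ, Θ, Ω, Ξ`), `Δ` a `k×k` `p`-badly
approximable matrix function, and `‖Φ#(ζ)‖ ≤ ‖Δ(ζ)‖` a.e., then `Φ` is `p`-badly
approximable. -/
theorem stmt19 {k l : ℕ} (p q : ℝ≥0∞) (hp2 : 2 ≤ p) (hptop : p ≠ ⊤)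
    (hpq : 1 / p + 1 / q = 1 / 2)
    (Φ : UnitCircle → Matrix (Fin k ⊕ Fin l) (Fin k ⊕ Fin l) ℂ)
    (hΦ : ∀ i j, MemLp (fun t => Φ t i j) p mT)
    (Υ : UnitCircle → Matrix (Fin k ⊕ Fin l) (Fin k) ℂ)
    (Θ : UnitCircle → Matrix (Fin k ⊕ Fin l) (Fin l) ℂ)
    (Ω : UnitCircle → Matrix (Fin k ⊕ Fin l) (Fin k) ℂ)
    (Ξ : UnitCircle → Matrix (Fin k ⊕ Fin l) (Fin l) ℂ)
    (hΥ : MatInner Υ ∧ MatCoouter Υ) (hΘ : MatInner Θ ∧ MatCoouter Θ)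
    (hΩ : MatInner Ω ∧ MatCoouter Ω) (hΞ : MatInner Ξ ∧ MatCoouter Ξ)
    (V W : UnitCircle → Matrix (Fin k ⊕ Fin l) (Fin k ⊕ Fin l) ℂ)
    (hV : V = fun t => Matrix.fromCols (Υ t) ((Θ t).map (starRingEnd ℂ)))
    (hW : W = fun t => (Matrix.fromCols (Ω t) ((Ξ t).map (starRingEnd ℂ)))ᵀ)
    (hVu : ∀ᵐ t ∂mT, (V t)ᴴ * V t = 1)
    (hWu : ∀ᵐ t ∂mT, (W t)ᴴ * W t = 1)
    (Δ : UnitCircle → Matrix (Fin k) (Fin k) ℂ)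
    (hΔLp : ∀ i j, MemLp (fun t => Δ t i j) p mT)
    (hΔbad : ∀ Q : UnitCircle → Matrix (Fin k) (Fin k) ℂ, MatHardy p Q →
      eLpNorm (fun t => opN (Δ t)) p mT ≤ eLpNorm (fun t => opN (Δ t - Q t)) p mT)
    (Φs : UnitCircle → Matrix (Fin l) (Fin l) ℂ)
    (hΦs : ∀ᵐ t ∂mT, opN (Φs t) ≤ opN (Δ t))
    (hfact : ∀ᵐ t ∂mT, Φ t = (W t)ᴴ * Matrix.fromBlocks (Δ t) 0 0 (Φs t) * (V t)ᴴ) :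
    ∀ Q : UnitCircle → Matrix (Fin k ⊕ Fin l) (Fin k ⊕ Fin l) ℂ, MatHardy p Q →
      eLpNorm (fun t => opN (Φ t)) p mT ≤ eLpNorm (fun t => opN (Φ t - Q t)) p mT := by
  intro Q hQ
  -- the compressed analytic approximant `R = Ωᵀ Q Υ`
  set R : UnitCircle → Matrix (Fin k) (Fin k) ℂ := fun t => (Ω t)ᵀ * Q t * Υ t with hR
  have h1p : (1 : ℝ≥0∞) ≤ p := le_trans (by norm_num) hp2
  -- entries of `R` as explicit double sums
  have hRentry : ∀ (i j : Fin k), (fun t => R t i j) =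
      fun t => ∑ b : Fin k ⊕ Fin l, ∑ a : Fin k ⊕ Fin l,
        Ω t a i * (Υ t b j * Q t a b) := by
    intro i j
    funext t
    simp only [hR, Matrix.mul_apply, Matrix.transpose_apply, Finset.sum_mul]
    refine Finset.sum_congr rfl fun b _ => Finset.sum_congr rfl fun a _ => by ring
  have hΩtop : ∀ a i, MemLp (fun t => Ω t a i) ⊤ mT := hΩ.1.1
  have hΩan : ∀ n : ℤ, n < 0 → ∀ a i, fourierCoeff (fun t => Ω t a i) n = 0 := hΩ.1.2.1
  have hΥtop : ∀ b j, MemLp (fun t => Υ t b j) ⊤ mT := hΥ.1.1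
  have hΥan : ∀ n : ℤ, n < 0 → ∀ b j, fourierCoeff (fun t => Υ t b j) n = 0 := hΥ.1.2.1
  have hQmem : ∀ a b, MemLp (fun t => Q t a b) p mT := hQ.1
  have hQ2 : ∀ a b, MemLp (fun t => Q t a b) 2 mT := fun a b =>
    (hQmem a b).mono_exponent hp2
  have hterm_p : ∀ (i j : Fin k) (a b : Fin k ⊕ Fin l),
      MemLp (fun t => Ω t a i * (Υ t b j * Q t a b)) p mT := fun i j a b =>
    memLp_mul_top_left (hΩtop a i) (memLp_mul_top_left (hΥtop b j) (hQmem a b))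
  -- R is in H^p
  have hRH : MatHardy p R := by
    constructor
    · intro i j
      rw [hRentry i j]
      exact memLp_finset_sum _ fun b _ => memLp_finset_sum _ fun a _ => hterm_p i j a b
    · intro n hn i j
      rw [hRentry i j]
      rw [fourierCoeff_finset_sum _ _ (fun b _ => integrable_finset_sum _
        (fun a _ => ((hterm_p i j a b).mono_exponent h1p).integrable le_rfl))]
      refine Finset.sum_eq_zero fun b _ => ?_
      rw [fourierCoeff_finset_sum _ _
        (fun a _ => ((hterm_p i j a b).mono_exponent h1p).integrable le_rfl)]
      refine Finset.sum_eq_zero fun a _ => ?_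
      refine analytic_mul_coeff (hΩtop a i) (fun m hm => hΩan m hm a i) ?_ ?_ n hn
      · exact memLp_mul_top_left (hΥtop b j) (hQ2 a b)
      · exact analytic_mul_coeff (hΥtop b j) (fun m hm => hΥan m hm b j) (hQ2 a b)
          (fun m hm => hQ.2 m hm a b)
  -- pointwise comparison of operator norms
  have hVW : ∀ᵐ t ∂mT, opN (Φ t) ≤ opN (Δ t) ∧ opN (Δ t - R t) ≤ opN (Φ t - Q t) := by
    filter_upwards [hfact, hVu, hWu, hΦs] with t h1 h2 h3 h4
    have hWW : W t * (W t)ᴴ = 1 := mul_eq_one_comm.mp h3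
    have hVV : V t * (V t)ᴴ = 1 := mul_eq_one_comm.mp h2
    have hWH : ((W t)ᴴ)ᴴ * (W t)ᴴ = 1 := by
      rwa [Matrix.conjTranspose_conjTranspose]
    have hVH : ((V t)ᴴ)ᴴ * (V t)ᴴ = 1 := by
      rwa [Matrix.conjTranspose_conjTranspose]
    set D : Matrix (Fin k ⊕ Fin l) (Fin k ⊕ Fin l) ℂ :=
      Matrix.fromBlocks (Δ t) 0 0 (Φs t) with hD
    constructor
    · -- `opN (Φ t) ≤ opN (Δ t)`
      have e1 : opN (Φ t) = opN D := by
        rw [h1, opN_unitary_right hVH, opN_unitary_left hWH]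
      rw [e1]
      refine le_trans (opN_fromBlocks_le (Δ t) (Φs t)) (max_le le_rfl h4)
    · -- `opN (Δ t - R t) ≤ opN (Φ t - Q t)`
      have hQfact : Φ t - Q t = (W t)ᴴ * (D - W t * Q t * V t) * (V t)ᴴ := by
        have e2 : (W t)ᴴ * (W t * Q t * V t) * (V t)ᴴ = Q t := by
          rw [Matrix.mul_assoc (W t) (Q t) (V t), ← Matrix.mul_assoc ((W t)ᴴ) (W t) _, h3,
            Matrix.one_mul, Matrix.mul_assoc, hVV, Matrix.mul_one]
        rw [Matrix.mul_sub, Matrix.sub_mul, e2, ← h1]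
      have hblock : Δ t - R t = (D - W t * Q t * V t).toBlocks₁₁ := by
        ext i j
        have hWQV : (W t * Q t * V t) (Sum.inl i) (Sum.inl j) = R t i j := by
          simp only [hR, hW, hV, Matrix.mul_apply, Matrix.transpose_apply,
            Matrix.fromCols_apply_inl]
        simp only [Matrix.toBlocks₁₁, Matrix.sub_apply, Matrix.of_apply, hD,
          Matrix.fromBlocks_apply₁₁, hWQV]
      have e3 : opN (Φ t - Q t) = opN (D - W t * Q t * V t) := by
        rw [hQfact, opN_unitary_right hVH, opN_unitary_left hWH]
      rw [e3, hblock]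
      exact opN_toBlocks₁₁_le _
  -- assemble the chain of inequalities
  have step1 : eLpNorm (fun t => opN (Φ t)) p mT ≤ eLpNorm (fun t => opN (Δ t)) p mT := by
    refine eLpNorm_mono_ae ?_
    filter_upwards [hVW] with t ht
    rw [Real.norm_of_nonneg (opN_nonneg _), Real.norm_of_nonneg (opN_nonneg _)]
    exact ht.1
  have step2 := hΔbad R hRH
  have step3 : eLpNorm (fun t => opN (Δ t - R t)) p mT ≤
      eLpNorm (fun t => opN (Φ t - Q t)) p mT := by
    refine eLpNorm_mono_ae ?_
    filter_upwards [hVW] with t ht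
    rw [Real.norm_of_nonneg (opN_nonneg _), Real.norm_of_nonneg (opN_nonneg _)]
    exact ht.2
  exact le_trans step1 (le_trans step2 step3)

end
end
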